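/- Let Ω be a countably infinite set and let u, v, f ∈ Ω^Ω. If k(u) = k(f) = ∞, d(f) > 0, d(u) > 0, c(v) = ∞, and 0 < d(v) < ∞, then f belongs to the subsemigroup of Ω^Ω generated by S_{1,2,3,4,5} ∪ {u, v}. -/
import Mathlib


/-!
Setting: `Ω` is a countably infinite set, `Function.End Ω = Ω → Ω` is the full
transformation semigroup (a subset is closed under composition in one order iff
it is closed in the other, so the lattice of subsemigroups is unaffected by the
left-to-right convention of the paper).
-/

open Cardinal

/-- A transversal of `f`: a set on which `f` is injective and whose image is all of `Ωf`. -/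
def IsTransversal {Ω : Type*} (f : Ω → Ω) (T : Set Ω) : Prop :=
  Set.InjOn f T ∧ f '' T = Set.range f

/-- The defect `d(f) = |Ω \ Ωf|`. -/
noncomputable def defect {Ω : Type*} (f : Ω → Ω) : Cardinal :=
  #((Set.range f)ᶜ : Set Ω)

/-- The collapse `c(f) = |Ω \ Σ|` for a transversal `Σ` of `f` (the value is
independent of the choice of transversal, so the infimum is the common value). -/
noncomputable def collapse {Ω : Type*} (f : Ω → Ω) : Cardinal :=
  ⨅ T : {T : Set Ω // IsTransversal f T}, #(T.1ᶜ : Set Ω)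

/-- The infinite contraction index `k(f) = |{α : αf⁻¹ infinite}|`. -/
noncomputable def contract {Ω : Type*} (f : Ω → Ω) : Cardinal :=
  #({α : Ω | (f ⁻¹' {α}).Infinite} : Set Ω)

def S1 {Ω : Type*} : Set (Function.End Ω) := {f | collapse f = 0 ∨ 0 < defect f}
def S2 {Ω : Type*} : Set (Function.End Ω) := {f | 0 < collapse f ∨ defect f = 0}
def S3 {Ω : Type*} : Set (Function.End Ω) := {f | collapse f < ℵ₀ ∨ ℵ₀ ≤ defect f}
def S4 {Ω : Type*} : Set (Function.End Ω) := {f | ℵ₀ ≤ collapse f ∨ defect f < ℵ₀}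
def S5 {Ω : Type*} : Set (Function.End Ω) := {f | contract f < ℵ₀}

/-- `Sym(Ω)`, the bijections of `Ω`. -/
def SymOmega {Ω : Type*} : Set (Function.End Ω) := {f | Function.Bijective f}

/-- `U = {f : d(f) = ∞ or 0 < c(f) < ∞} ∪ Sym(Ω)`. -/
def SetU {Ω : Type*} : Set (Function.End Ω) :=
  {f | ℵ₀ ≤ defect f ∨ (0 < collapse f ∧ collapse f < ℵ₀)} ∪ SymOmega

/-- `V = {f : c(f) = ∞ or 0 < d(f) < ∞} ∪ Sym(Ω)`. -/
def SetV {Ω : Type*} : Set (Function.End Ω) :=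
  {f | ℵ₀ ≤ collapse f ∨ (0 < defect f ∧ defect f < ℵ₀)} ∪ SymOmega

/-- `S_{1,2,3,4,5}`. -/
def S12345 {Ω : Type*} : Set (Function.End Ω) := S1 ∩ S2 ∩ S3 ∩ S4 ∩ S5

/-- The family `S_1, …, S_5` indexed by `Fin 5`. -/
def SS {Ω : Type*} : Fin 5 → Set (Function.End Ω) := ![S1, S2, S3, S4, S5]

section Helpers

open Set Function

variable {Ω : Type*}

lemma collapse_le_of_transversal (g : Ω → Ω) {T : Set Ω} (hT : IsTransversal g T) :
    collapse g ≤ #(Tᶜ : Set Ω) := by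
  unfold collapse
  exact ciInf_le' _ (⟨T, hT⟩ : {T : Set Ω // IsTransversal g T})

lemma exists_transversal [Nonempty Ω] (g : Ω → Ω) : ∃ T, IsTransversal g T := by
  classical
  obtain ⟨x₀⟩ := ‹Nonempty Ω›
  set s : Ω → Ω := fun β => if h : ∃ x, g x = β then h.choose else x₀ with hs
  have hsec : ∀ β ∈ Set.range g, g (s β) = β := by
    intro β hβ
    have hβ' : ∃ x, g x = β := hβ
    simp only [hs, dif_pos hβ']
    exact hβ'.choose_spec
  refine ⟨s '' Set.range g, ?_, ?_⟩
  · rintro a ⟨β, hβ, rfl⟩ b ⟨γ, hγ, rfl⟩ hab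
    rw [hsec β hβ, hsec γ hγ] at hab
    rw [hab]
  · ext β
    constructor
    · rintro ⟨a, ⟨γ, hγ, rfl⟩, rfl⟩
      rw [hsec γ hγ]; exact hγ
    · intro hβ
      exact ⟨s β, ⟨β, hβ, rfl⟩, hsec β hβ⟩

lemma le_collapse [Nonempty Ω] {g : Ω → Ω} {a : Cardinal}
    (h : ∀ T : Set Ω, IsTransversal g T → a ≤ #(Tᶜ : Set Ω)) : a ≤ collapse g := by
  obtain ⟨T₀, hT₀⟩ := exists_transversal g
  haveI : Nonempty {T : Set Ω // IsTransversal g T} := ⟨⟨T₀, hT₀⟩⟩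
  exact le_ciInf fun T => h T.1 T.2

lemma collapse_eq_zero_of_injective {g : Ω → Ω} (hg : Function.Injective g) :
    collapse g = 0 := by
  have h := collapse_le_of_transversal g (T := Set.univ) ⟨hg.injOn, by rw [Set.image_univ]⟩
  simpa using h

lemma collapse_pos [Nonempty Ω] {g : Ω → Ω} {x y : Ω} (hxy : x ≠ y) (hg : g x = g y) :
    0 < collapse g := by
  have h : (1 : Cardinal) ≤ collapse g := by
    apply le_collapse
    intro T hT
    rw [Cardinal.one_le_iff_ne_zero, Cardinal.mk_ne_zero_iff]
    by_contra hne
    simp only [not_nonempty_iff] at hne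
    have hx : x ∈ T := by
      by_contra hx; exact hne.false ⟨x, hx⟩
    have hy : y ∈ T := by
      by_contra hy; exact hne.false ⟨y, hy⟩
    exact hxy (hT.1 hx hy hg)
  exact lt_of_lt_of_le zero_lt_one h

lemma aleph0_le_collapse [Nonempty Ω] {g : Ω → Ω} (x y : ℕ → Ω) (w : Ω → ℕ)
    (hxy : ∀ n, x n ≠ y n) (hg : ∀ n, g (x n) = g (y n))
    (hw : ∀ n, w (x n) = n ∧ w (y n) = n) : Cardinal.aleph0 ≤ collapse g := by
  apply le_collapse
  intro T hT
  classical
  have hz : ∀ n, ∃ z ∈ (Tᶜ : Set Ω), w z = n := by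
    intro n
    by_cases hx : x n ∈ T
    · have hyT : y n ∉ T := by
        intro hy
        exact hxy n (hT.1 hx hy (hg n))
      exact ⟨y n, hyT, (hw n).2⟩
    · exact ⟨x n, hx, (hw n).1⟩
  choose z hz1 hz2 using hz
  have hinj : Function.Injective (fun n => (⟨z n, hz1 n⟩ : (Tᶜ : Set Ω))) := by
    intro n m hnm
    have : z n = z m := congrArg Subtype.val hnm
    rw [← hz2 n, ← hz2 m, this]
  haveI : Infinite (Tᶜ : Set Ω) := Infinite.of_injective _ hinj
  exact Cardinal.infinite_iff.mp ‹_›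

lemma contract_eq_zero {g : Ω → Ω} (h : ∀ z, (g ⁻¹' {z}).Finite) : contract g = 0 := by
  unfold contract
  convert Cardinal.mk_emptyCollection Ω
  ext z
  simp [Set.not_infinite.mpr (h z)]

lemma defect_infinite {g : Ω → Ω} (h : ((Set.range g)ᶜ).Infinite) : Cardinal.aleph0 ≤ defect g :=
  Cardinal.infinite_iff.mp (Set.infinite_coe_iff.mpr h)

lemma mem_S12345_inf {g : Function.End Ω} (hc : Cardinal.aleph0 ≤ collapse g)
    (hd : Cardinal.aleph0 ≤ defect g) (hk : contract g < Cardinal.aleph0) : g ∈ S12345 :=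
  ⟨⟨⟨⟨Or.inr (lt_of_lt_of_le Cardinal.aleph0_pos hd), Or.inl (lt_of_lt_of_le Cardinal.aleph0_pos hc)⟩,
    Or.inr hd⟩, Or.inl hc⟩, hk⟩

lemma mem_S12345_fin {g : Function.End Ω} (hc0 : 0 < collapse g) (hc : collapse g < Cardinal.aleph0)
    (hd0 : 0 < defect g) (hd : defect g < Cardinal.aleph0) (hk : contract g < Cardinal.aleph0) :
    g ∈ S12345 :=
  ⟨⟨⟨⟨Or.inr hd0, Or.inl hc0⟩, Or.inl hc⟩, Or.inr hd⟩, hk⟩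

lemma bij_mem_S12345 {g : Function.End Ω} (hg : Function.Bijective g) : g ∈ S12345 := by
  have hc : collapse g = 0 := collapse_eq_zero_of_injective hg.1
  have hd : defect g = 0 := by
    unfold defect
    rw [Set.range_eq_univ.mpr hg.2]
    simp
  have hk : contract g = 0 := by
    apply contract_eq_zero
    intro z
    apply Set.Subsingleton.finite
    intro a ha b hb
    exact hg.1 (ha.trans hb.symm)
  refine ⟨⟨⟨⟨Or.inl hc, Or.inr hd⟩, Or.inl ?_⟩, Or.inr ?_⟩, ?_⟩
  · rw [hc]; exact Cardinal.aleph0_pos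
  · rw [hd]; exact Cardinal.aleph0_pos
  · show contract g < _
    rw [hk]; exact Cardinal.aleph0_pos

end Helpers

lemma stepA {Ω : Type} [Countable Ω] [Infinite Ω] (u v f : Function.End Ω)
    (hku : Cardinal.aleph0 ≤ contract u) (hkf : Cardinal.aleph0 ≤ contract f)
    (σ : Ω → Ω) (hσ : Set.InjOn σ (Set.range f))
    (hσc : ((σ '' Set.range f)ᶜ).Infinite) :
    (fun x => σ (f x) : Function.End Ω) ∈ Subsemigroup.closure (S12345 ∪ {u, v}) := by
  classical
  obtain ⟨ee⟩ : Nonempty (Ω ≃ ℕ) := nonempty_equiv_of_countable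
  set Au : Set Ω := {β : Ω | (u ⁻¹' {β}).Infinite} with hAu_def
  set Af : Set Ω := {α : Ω | (f ⁻¹' {α}).Infinite} with hAf_def
  have hAu : Au.Infinite := Set.infinite_coe_iff.mp (Cardinal.infinite_iff.mpr hku)
  have hAf : Af.Infinite := Set.infinite_coe_iff.mp (Cardinal.infinite_iff.mpr hkf)
  set φ : ℕ ↪ Au := hAu.natEmbedding with hφ_def
  have hφval : ∀ n m : ℕ, (↑(φ n) : Ω) = ↑(φ m) → n = m := fun n m h =>
    φ.injective (Subtype.coe_injective h)
  set c : Ω → Ω := fun α => ↑(φ (2 * ee α + 2)) with hc_def0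
  have hc_def : ∀ α, c α = ↑(φ (2 * ee α + 2)) := fun _ => rfl
  have hc_mem : ∀ α, (u ⁻¹' {c α}).Infinite := fun α => (φ (2 * ee α + 2)).2
  have hc_inj : Function.Injective c := by
    intro a b h
    rw [hc_def a, hc_def b] at h
    have h2 := hφval _ _ h
    have h3 : ee a = ee b := by omega
    exact ee.injective h3
  -- pairs in infinite fibers of f
  have hpair : ∀ a : Af, ∃ z : Ω × Ω, f z.1 = ↑a ∧ f z.2 = ↑a ∧ z.1 ≠ z.2 := by
    rintro ⟨α, hα⟩
    obtain ⟨x, hx, y, hy, hxy⟩ := Set.Infinite.nontrivial hα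
    exact ⟨(x, y), hx, hy, hxy⟩
  choose pr hpr1 hpr2 hpr3 using hpair
  set nnf : ℕ ↪ Af := hAf.natEmbedding with hnnf_def
  haveI : Nonempty Af := ⟨nnf 0⟩
  -- the pair-collapsing map r
  set r : Ω → Ω := fun x =>
    if h : (f ⁻¹' {f x}).Infinite then
      (if x = (pr ⟨f x, h⟩).2 then (pr ⟨f x, h⟩).1 else x)
    else x with hr_def0
  have hr_def : ∀ x, r x =
      if h : (f ⁻¹' {f x}).Infinite then
        (if x = (pr ⟨f x, h⟩).2 then (pr ⟨f x, h⟩).1 else x)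
      else x := fun _ => rfl
  have hrf : ∀ x, f (r x) = f x := by
    intro x
    rw [hr_def x]
    split_ifs with h1 h2
    · exact hpr1 ⟨f x, h1⟩
    · rfl
    · rfl
  have hr_cases : ∀ x, r x = x ∨
      ∃ h : (f ⁻¹' {f x}).Infinite, x = (pr ⟨f x, h⟩).2 ∧ r x = (pr ⟨f x, h⟩).1 := by
    intro x
    rw [hr_def x]
    split_ifs with h1 h2
    · exact Or.inr ⟨h1, h2, rfl⟩
    · exact Or.inl rfl
    · exact Or.inl rfl
  have hra1 : ∀ a : Af, r (pr a).1 = (pr a).1 := by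
    intro a
    have h1 : (f ⁻¹' {f (pr a).1}).Infinite := by rw [hpr1 a]; exact a.2
    have he : (⟨f (pr a).1, h1⟩ : Af) = a := Subtype.ext (hpr1 a)
    rw [hr_def, dif_pos h1, he, if_neg (hpr3 a)]
  have hra2 : ∀ a : Af, r (pr a).2 = (pr a).1 := by
    intro a
    have h1 : (f ⁻¹' {f (pr a).2}).Infinite := by rw [hpr2 a]; exact a.2
    have he : (⟨f (pr a).2, h1⟩ : Af) = a := Subtype.ext (hpr2 a)
    rw [hr_def, dif_pos h1, he, if_pos rfl]
  have hrfib : ∀ z, (r ⁻¹' {z}).Finite := by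
    intro z
    by_cases hz : (f ⁻¹' {f z}).Infinite
    · apply Set.Finite.subset ((Set.finite_singleton (pr ⟨f z, hz⟩).2).insert z)
      intro x hx
      have hx' : r x = z := hx
      rcases hr_cases x with h | ⟨h, hx2, hrx⟩
      · rw [h] at hx'
        exact Set.mem_insert_iff.mpr (Or.inl hx')
      · have hfz : f x = f z := by rw [← hrf x, hx']
        have he : (⟨f x, h⟩ : Af) = ⟨f z, hz⟩ := Subtype.ext hfz
        refine Set.mem_insert_iff.mpr (Or.inr ?_)
        rw [hx2, he]
        exact rfl
    · apply Set.Finite.subset (Set.finite_singleton z)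
      intro x hx
      have hx' : r x = z := hx
      rcases hr_cases x with h | ⟨h, hx2, hrx⟩
      · rw [h] at hx'
        exact hx'
      · exfalso
        apply hz
        have hfz : f x = f z := by rw [← hrf x, hx']
        rw [← hfz]
        exact h
  -- the fiber-embedding map m
  set m : Ω → ℕ → Ω := fun α n => (((hc_mem α).natEmbedding) n).1 with hm_def
  have hm1 : ∀ α n, u (m α n) = c α := fun α n => (((hc_mem α).natEmbedding) n).2
  have hm2 : ∀ α n n', m α n = m α n' → n = n' := fun α n n' h =>
    ((hc_mem α).natEmbedding).injective (Subtype.coe_injective h)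
  set g₂ : Function.End Ω := fun x => m (f x) (ee (r x)) with hg₂_def0
  have hg₂_def : ∀ x, g₂ x = m (f x) (ee (r x)) := fun _ => rfl
  have hg2u : ∀ x, u (g₂ x) = c (f x) := fun x => hm1 _ _
  have hg2inj : ∀ x y, g₂ x = g₂ y → f x = f y ∧ r x = r y := by
    intro x y h
    have hf : f x = f y := by
      apply hc_inj
      rw [← hg2u x, ← hg2u y, h]
    refine ⟨hf, ?_⟩
    have h' : m (f x) (ee (r x)) = m (f y) (ee (r y)) := h
    rw [hf] at h'
    exact ee.injective (hm2 _ _ _ h')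
  -- g₂ ∈ S12345
  have hg2col : Cardinal.aleph0 ≤ collapse g₂ := by
    set w : Ω → ℕ := fun z =>
      if h : (f ⁻¹' {f z}).Infinite then Function.invFun nnf ⟨f z, h⟩ else 0 with hw_def
    apply aleph0_le_collapse (fun n => (pr (nnf n)).1) (fun n => (pr (nnf n)).2) w
    · exact fun n => hpr3 (nnf n)
    · intro n
      rw [hg₂_def, hg₂_def, hra1 (nnf n), hra2 (nnf n), hpr1 (nnf n), hpr2 (nnf n)]
    · intro n
      constructor
      · have h1 : (f ⁻¹' {f (pr (nnf n)).1}).Infinite := by rw [hpr1 (nnf n)]; exact (nnf n).2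
        have he : (⟨f (pr (nnf n)).1, h1⟩ : Af) = nnf n := Subtype.ext (hpr1 (nnf n))
        rw [hw_def]
        simp only []
        rw [dif_pos h1, he]
        exact Function.leftInverse_invFun nnf.injective n
      · have h1 : (f ⁻¹' {f (pr (nnf n)).2}).Infinite := by rw [hpr2 (nnf n)]; exact (nnf n).2
        have he : (⟨f (pr (nnf n)).2, h1⟩ : Af) = nnf n := Subtype.ext (hpr2 (nnf n))
        rw [hw_def]
        simp only []
        rw [dif_pos h1, he]
        exact Function.leftInverse_invFun nnf.injective n
  have hg2def : Cardinal.aleph0 ≤ defect g₂ := by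
    apply defect_infinite
    apply Set.Infinite.mono _ ((φ 1).2 : (u ⁻¹' {(↑(φ 1) : Ω)}).Infinite)
    intro z hz
    simp only [Set.mem_compl_iff, Set.mem_range]
    rintro ⟨x, rfl⟩
    have h1 : u (g₂ x) = c (f x) := hg2u x
    have h2 : u (g₂ x) = ↑(φ 1) := hz
    rw [hc_def] at h1
    have h3 := hφval _ _ (h1.symm.trans h2)
    omega
  have hg2con : contract g₂ = 0 := by
    apply contract_eq_zero
    intro z
    rcases Set.eq_empty_or_nonempty (g₂ ⁻¹' {z}) with h | ⟨xb, hxb⟩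
    · rw [h]; exact Set.finite_empty
    · apply (hrfib (r xb)).subset
      intro x hx
      simp only [Set.mem_preimage, Set.mem_singleton_iff] at hx hxb ⊢
      exact (hg2inj x xb (hx.trans hxb.symm)).2
  have hg2S : g₂ ∈ S12345 :=
    mem_S12345_inf hg2col hg2def (by rw [hg2con]; exact Cardinal.aleph0_pos)
  -- the bijection g₁
  set B : Set Ω := c '' Set.range f with hB_def
  set S : Set Ω := σ '' Set.range f with hS_def
  have hBc : (Bᶜ).Infinite := by
    apply Set.infinite_of_injective_forall_mem
      (f := fun k : ℕ => (↑(φ (2 * k + 1)) : Ω)) (s := Bᶜ)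
    · intro a b h
      have := hφval _ _ h
      omega
    · intro k
      simp only [Set.mem_compl_iff, hB_def, Set.mem_image]
      rintro ⟨α, hα, hcα⟩
      rw [hc_def] at hcα
      have := hφval _ _ hcα
      omega
  have hSc : (Sᶜ).Infinite := hσc
  haveI : Infinite (Bᶜ : Set Ω) := Set.infinite_coe_iff.mpr hBc
  haveI : Infinite (Sᶜ : Set Ω) := Set.infinite_coe_iff.mpr hSc
  obtain ⟨h₂⟩ : Nonempty ((Bᶜ : Set Ω) ≃ (Sᶜ : Set Ω)) := nonempty_equiv_of_countable
  set eB : Set.range f ≃ B := Equiv.Set.imageOfInjOn c (Set.range f) hc_inj.injOn with heB_def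
  set eS : Set.range f ≃ S := Equiv.Set.imageOfInjOn σ (Set.range f) hσ with heS_def
  set g₁e : Ω ≃ Ω :=
    (Equiv.Set.sumCompl B).symm.trans (((eB.symm.trans eS).sumCongr h₂).trans
      (Equiv.Set.sumCompl S)) with hg₁e_def
  set g₁ : Function.End Ω := ⇑g₁e with hg₁_def
  have hg₁ : ∀ α ∈ Set.range f, g₁ (c α) = σ α := by
    intro α hα
    have hmem : c α ∈ B := Set.mem_image_of_mem c hα
    show g₁e (c α) = σ α
    rw [hg₁e_def]
    simp only [Equiv.trans_apply]
    rw [Equiv.Set.sumCompl_symm_apply_of_mem hmem]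
    have heB2 : eB.symm ⟨c α, hmem⟩ = ⟨α, hα⟩ := by
      rw [Equiv.symm_apply_eq]
      exact Subtype.ext rfl
    simp only [Equiv.sumCongr_apply, Sum.map_inl, Equiv.trans_apply]
    rw [heB2]
    rfl
  have hg1S : g₁ ∈ S12345 := bij_mem_S12345 g₁e.bijective
  -- assembly
  have heq : (fun x => σ (f x)) = (g₁ * u * g₂ : Function.End Ω) := by
    funext x
    show σ (f x) = g₁ (u (g₂ x))
    rw [hg2u x, hg₁ (f x) ⟨x, rfl⟩]
  have h1 : g₁ ∈ Subsemigroup.closure (S12345 ∪ {u, v} : Set (Function.End Ω)) :=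
    Subsemigroup.subset_closure (Or.inl hg1S)
  have h2 : u ∈ Subsemigroup.closure (S12345 ∪ {u, v} : Set (Function.End Ω)) :=
    Subsemigroup.subset_closure (Or.inr (Set.mem_insert u {v}))
  have h3 : g₂ ∈ Subsemigroup.closure (S12345 ∪ {u, v} : Set (Function.End Ω)) :=
    Subsemigroup.subset_closure (Or.inl hg2S)
  have hmem : (g₁ * u * g₂ : Function.End Ω) ∈
      Subsemigroup.closure (S12345 ∪ {u, v} : Set (Function.End Ω)) :=
    Subsemigroup.mul_mem _ (Subsemigroup.mul_mem _ h1 h2) h3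
  rw [heq]
  exact hmem

theorem stmt12 (Ω : Type) [Countable Ω] [Infinite Ω] (u v f : Function.End Ω)
    (hku : ℵ₀ ≤ contract u) (hkf : ℵ₀ ≤ contract f)
    (hdf : 0 < defect f) (hdu : 0 < defect u)
    (hcv : ℵ₀ ≤ collapse v) (hdv : 0 < defect v) (hdv' : defect v < ℵ₀) :
    f ∈ Subsemigroup.closure (S12345 ∪ {u, v}) := by
  classical
  by_cases hcase : Cardinal.aleph0 ≤ defect f
  · have hid : ((id '' Set.range f)ᶜ : Set Ω).Infinite := by
      rw [Set.image_id]
      exact Set.infinite_coe_iff.mp (Cardinal.infinite_iff.mpr hcase)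
    exact stepA u v f hku hkf id Function.injective_id.injOn hid
  · push_neg at hcase
    obtain ⟨x₀⟩ : Nonempty Ω := inferInstance
    -- a section of v and the associated transversal
    set s : Ω → Ω := fun β => if h : ∃ x, v x = β then h.choose else x₀ with hs_def
    have hs_val : ∀ β, s β = if h : ∃ x, v x = β then h.choose else x₀ := fun _ => rfl
    have hsv : ∀ β ∈ Set.range v, v (s β) = β := by
      intro β hβ
      have hβ' : ∃ x, v x = β := hβ
      rw [hs_val β, dif_pos hβ']
      exact hβ'.choose_spec
    set Tv : Set Ω := s '' Set.range v with hTv_def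
    have hsinj : Set.InjOn s (Set.range v) := by
      intro a ha b hb h
      rw [← hsv a ha, ← hsv b hb, h]
    have hTvtrans : IsTransversal v Tv := by
      constructor
      · rintro a ⟨β, hβ, rfl⟩ b ⟨γ, hγ, rfl⟩ hab
        rw [hsv β hβ, hsv γ hγ] at hab
        rw [hab]
      · ext β
        constructor
        · rintro ⟨a, ⟨γ, hγ, rfl⟩, rfl⟩
          rw [hsv γ hγ]
          exact hγ
        · intro hβ
          exact ⟨s β, ⟨β, hβ, rfl⟩, hsv β hβ⟩
    have hsid : ∀ x ∈ Tv, s (v x) = x := by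
      rintro _ ⟨β, hβ, rfl⟩
      rw [hsv β hβ]
    -- various infiniteness facts
    have hAf : ({α : Ω | (f ⁻¹' {α}).Infinite}).Infinite :=
      Set.infinite_coe_iff.mp (Cardinal.infinite_iff.mpr hkf)
    have hrf_inf : (Set.range f).Infinite := by
      apply hAf.mono
      intro α hα
      obtain ⟨x, hx⟩ := Set.Infinite.nonempty hα
      exact ⟨x, hx⟩
    have hrv_fin : ((Set.range v)ᶜ).Finite := Cardinal.lt_aleph0_iff_set_finite.mp hdv'
    have hrv_inf : (Set.range v).Infinite := by
      have h := hrv_fin.infinite_compl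
      rwa [compl_compl] at h
    have hTv_inf : Tv.Infinite := (Set.infinite_image_iff hsinj).mpr hrv_inf
    have hTvc_inf : ((Tv)ᶜ).Infinite := by
      rw [← Set.infinite_coe_iff]
      exact Cardinal.infinite_iff.mpr
        (le_trans hcv (collapse_le_of_transversal v hTvtrans))
    haveI : Infinite (Set.range f) := Set.infinite_coe_iff.mpr hrf_inf
    haveI : Infinite Tv := Set.infinite_coe_iff.mpr hTv_inf
    obtain ⟨eσ⟩ : Nonempty ((Set.range f : Set Ω) ≃ (Tv : Set Ω)) :=
      nonempty_equiv_of_countable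
    -- the map σ sending range f bijectively onto the transversal
    set σ : Ω → Ω := fun x => if h : x ∈ Set.range f then ↑(eσ ⟨x, h⟩) else x₀ with hσ_def
    have hσ_val : ∀ x, σ x = if h : x ∈ Set.range f then ↑(eσ ⟨x, h⟩) else x₀ := fun _ => rfl
    have hσval : ∀ (x) (h : x ∈ Set.range f), σ x = ↑(eσ ⟨x, h⟩) := by
      intro x h
      rw [hσ_val x, dif_pos h]
    have hσinj : Set.InjOn σ (Set.range f) := by
      intro a ha b hb h
      rw [hσval a ha, hσval b hb] at h
      have h2 := eσ.injective (Subtype.coe_injective h)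
      exact congrArg Subtype.val h2
    have hσim : σ '' Set.range f = Tv := by
      apply Set.Subset.antisymm
      · rintro _ ⟨x, hx, rfl⟩
        rw [hσval x hx]
        exact (eσ ⟨x, hx⟩).2
      · intro b hb
        refine ⟨↑(eσ.symm ⟨b, hb⟩), (eσ.symm ⟨b, hb⟩).2, ?_⟩
        rw [hσval _ (eσ.symm ⟨b, hb⟩).2, Subtype.coe_eta, Equiv.apply_symm_apply]
    have hstep := stepA u v f hku hkf σ hσinj (by rw [hσim]; exact hTvc_inf)
    obtain ⟨α₀, hα₀⟩ := Set.Infinite.nonempty hrf_inf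
    -- the finishing map q
    set q : Function.End Ω := fun z =>
      if h : z ∈ Set.range v then ↑(eσ.symm ⟨s z, Set.mem_image_of_mem s h⟩) else α₀
      with hq_def
    have hq_val : ∀ z, q z =
        if h : z ∈ Set.range v then ↑(eσ.symm ⟨s z, Set.mem_image_of_mem s h⟩) else α₀ :=
      fun _ => rfl
    have hqval : ∀ (z) (h : z ∈ Set.range v),
        q z = ↑(eσ.symm ⟨s z, Set.mem_image_of_mem s h⟩) := by
      intro z h
      rw [hq_val z, dif_pos h]
    have hqneg : ∀ z, z ∉ Set.range v → q z = α₀ := by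
      intro z h
      rw [hq_val z, dif_neg h]
    have hq_range_f : ∀ z, q z ∈ Set.range f := by
      intro z
      by_cases h : z ∈ Set.range v
      · rw [hqval z h]; exact (eσ.symm _).2
      · rw [hqneg z h]; exact hα₀
    have hqτ : ∀ α ∈ Set.range f, q (v (σ α)) = α := by
      intro α hα
      have h1 : σ α = ↑(eσ ⟨α, hα⟩) := hσval α hα
      have hsigTv : σ α ∈ Tv := by rw [h1]; exact (eσ ⟨α, hα⟩).2
      have hv : v (σ α) ∈ Set.range v := ⟨σ α, rfl⟩
      rw [hqval _ hv]
      have h3 : (⟨s (v (σ α)), Set.mem_image_of_mem s hv⟩ : Tv) = eσ ⟨α, hα⟩ := by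
        apply Subtype.ext
        show s (v (σ α)) = ↑(eσ ⟨α, hα⟩)
        rw [hsid _ hsigTv, h1]
      rw [h3, Equiv.symm_apply_apply]
    have hqinj : Set.InjOn q (Set.range v) := by
      intro a ha b hb h
      rw [hqval a ha, hqval b hb] at h
      have h2 := eσ.symm.injective (Subtype.coe_injective h)
      have hsab : s a = s b := congrArg Subtype.val h2
      rw [← hsv a ha, ← hsv b hb, hsab]
    have hq_range : Set.range q = Set.range f := by
      apply Set.Subset.antisymm
      · rintro _ ⟨z, rfl⟩
        exact hq_range_f z
      · intro α hα
        exact ⟨v (σ α), hqτ α hα⟩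
    have hqT : IsTransversal q (Set.range v) := by
      refine ⟨hqinj, ?_⟩
      rw [hq_range]
      apply Set.Subset.antisymm
      · rintro _ ⟨z, hz, rfl⟩
        exact hq_range_f z
      · intro α hα
        exact ⟨v (σ α), ⟨σ α, rfl⟩, hqτ α hα⟩
    have hq_col_lt : collapse q < Cardinal.aleph0 :=
      lt_of_le_of_lt (collapse_le_of_transversal q hqT) hdv'
    obtain ⟨⟨z₀, hz₀⟩⟩ : Nonempty (((Set.range v)ᶜ : Set Ω)) :=
      Cardinal.mk_ne_zero_iff.mp hdv.ne'
    have hq_col_pos : 0 < collapse q := by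
      apply collapse_pos (x := z₀) (y := v (σ α₀))
      · intro h
        rw [h] at hz₀
        exact hz₀ ⟨σ α₀, rfl⟩
      · rw [hqneg z₀ hz₀, hqτ α₀ hα₀]
    have hq_def2 : defect q = defect f := by
      unfold defect
      rw [hq_range]
    have hq_con : contract q = 0 := by
      apply contract_eq_zero
      intro α
      apply Set.Finite.subset (hrv_fin.union (Set.finite_singleton (v (σ α))))
      intro z hz
      have hz' : q z = α := hz
      by_cases hzv : z ∈ Set.range v
      · apply Set.mem_union_right
        have hα : α ∈ Set.range f := by rw [← hz']; exact hq_range_f z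
        have h1 := hqval z hzv
        have h2 : (⟨α, hα⟩ : (Set.range f : Set Ω)) =
            eσ.symm ⟨s z, Set.mem_image_of_mem s hzv⟩ := by
          apply Subtype.ext
          show α = ↑(eσ.symm ⟨s z, Set.mem_image_of_mem s hzv⟩)
          rw [← hz', h1]
        have h3 : σ α = s z := by
          rw [hσval α hα, h2, Equiv.apply_symm_apply]
        show z ∈ ({v (σ α)} : Set Ω)
        rw [Set.mem_singleton_iff, h3, hsv z hzv]
      · exact Set.mem_union_left _ hzv
    have hq_S : q ∈ S12345 :=
      mem_S12345_fin hq_col_pos hq_col_lt (by rw [hq_def2]; exact hdf)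
        (by rw [hq_def2]; exact hcase) (by rw [hq_con]; exact Cardinal.aleph0_pos)
    have h1 : q ∈ Subsemigroup.closure (S12345 ∪ {u, v} : Set (Function.End Ω)) :=
      Subsemigroup.subset_closure (Or.inl hq_S)
    have h2 : v ∈ Subsemigroup.closure (S12345 ∪ {u, v} : Set (Function.End Ω)) :=
      Subsemigroup.subset_closure (Or.inr (Set.mem_insert_of_mem u rfl))
    set F : Function.End Ω := fun x => σ (f x) with hF_def
    have hstepF : F ∈ Subsemigroup.closure (S12345 ∪ {u, v} : Set (Function.End Ω)) := hstep
    have hmem : (q * v * F : Function.End Ω) ∈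
        Subsemigroup.closure (S12345 ∪ {u, v} : Set (Function.End Ω)) :=
      Subsemigroup.mul_mem _ (Subsemigroup.mul_mem _ h1 h2) hstepF
    have heq : f = (q * v * F : Function.End Ω) := by
      funext x
      show f x = q (v (σ (f x)))
      exact (hqτ (f x) ⟨x, rfl⟩).symm
    rw [heq]
    exact hmem
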